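/- Let f : ℕ → ℕ → ℕ be defined by f(0,h) = 0 for all h, f(n,0) = 1 for all n ≥ 1, and f(n,h) = f(n,h-1) + f(⌊n/2⌋,h) + f(n-1-⌊n/2⌋,h) for all n,h ≥ 1. Then for all natural numbers n ≥ 2 and h ≥ 1, viewing the values as real numbers, f(n,h) ≤ n^(1 + log₂ e) · (1 + (h-1)/(log₂ n))^(log₂ n), where log₂ denotes the real base-2 logarithm, e is Euler's number, and the powers on the right-hand side are real powers. -/

import Mathlib

private theorem fijalkow_key (f : ℕ → ℕ → ℕ)
    (hf0 : ∀ h, f 0 h = 0)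
    (hfn0 : ∀ n, 1 ≤ n → f n 0 = 1)
    (hrec : ∀ n h, 1 ≤ n → 1 ≤ h →
      f n h = f n (h - 1) + f (n / 2) h + f (n - 1 - n / 2) h) :
    ∀ p n h : ℕ, n + h ≤ p → 1 ≤ n →
      f n h ≤ n * Nat.choose (Nat.log 2 n + (h - 1)) (h - 1) := by
  intro p
  induction p with
  | zero => intro n h hp hn; omega
  | succ p ih =>
    intro n h hp hn
    -- bound for third argument m
    rcases Nat.eq_zero_or_pos h with rfl | hh
    · rw [hfn0 n hn]; simp; omega
    have hm : n - 1 - n / 2 ≤ n / 2 := by omega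
    rw [hrec n h hn hh]
    rcases Nat.lt_or_ge n 2 with hn2 | hn2
    · -- n = 1
      have hn1 : n = 1 := by omega
      subst hn1
      have h1 : (1:ℕ)/2 = 0 := by norm_num
      rw [h1, hf0]
      have := ih 1 (h-1) (by omega) (by norm_num)
      simp [Nat.log_one_right] at this ⊢
      omega
    -- n ≥ 2
    set k := Nat.log 2 n with hk
    have hk1 : 1 ≤ k := Nat.log_pos (by norm_num) hn2
    have hhalf : Nat.log 2 (n / 2) = k - 1 := Nat.log_div_base 2 n
    have hhalfpos : 1 ≤ n / 2 := by omega
    have T2 : f (n/2) h ≤ (n/2) * Nat.choose ((k-1) + (h-1)) (h-1) := by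
      have := ih (n/2) h (by omega) hhalfpos
      rwa [hhalf] at this
    have T3 : f (n-1-n/2) h ≤ (n-1-n/2) * Nat.choose ((k-1) + (h-1)) (h-1) := by
      rcases Nat.eq_zero_or_pos (n-1-n/2) with hm0 | hm1
      · rw [hm0, hf0]; simp
      · have := ih (n-1-n/2) h (by omega) hm1
        refine this.trans ?_
        apply Nat.mul_le_mul_left
        apply Nat.choose_le_choose
        have : Nat.log 2 (n-1-n/2) ≤ k - 1 := by
          rw [← hhalf]; exact Nat.log_mono_right hm
        omega
    rcases Nat.lt_or_ge h 2 with hh2 | hh2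
    · -- h = 1
      have hh1 : h = 1 := by omega
      subst hh1
      simp only [Nat.sub_self] at *
      rw [hfn0 n hn]
      simp only [Nat.choose_zero_right, mul_one] at T2 T3 ⊢
      omega
    · -- h ≥ 2
      have T1 : f n (h-1) ≤ n * Nat.choose (k + (h-2)) (h-2) := by
        have := ih n (h-1) (by omega) hn
        have e : h - 1 - 1 = h - 2 := by omega
        rwa [e] at this
      have pascal : Nat.choose (k + (h-1)) (h-1)
          = Nat.choose (k + (h-2)) (h-2) + Nat.choose (k + (h-2)) (h-1) := by
        have e1 : k + (h-1) = (k + (h-2)) + 1 := by omega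
        have e2 : h - 1 = (h-2) + 1 := by omega
        rw [e1, e2, Nat.choose_succ_succ]
      have e3 : (k-1) + (h-1) = k + (h-2) := by omega
      rw [e3] at T2 T3
      calc f n (h-1) + f (n/2) h + f (n-1-n/2) h
          ≤ n * Nat.choose (k + (h-2)) (h-2) + (n/2) * Nat.choose (k+(h-2)) (h-1)
            + (n-1-n/2) * Nat.choose (k+(h-2)) (h-1) := by omega
        _ ≤ n * Nat.choose (k + (h-2)) (h-2) + n * Nat.choose (k+(h-2)) (h-1) := by
            rw [add_assoc, ← Nat.add_mul]
            have : n/2 + (n-1-n/2) ≤ n := by omega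
            exact Nat.add_le_add_left (Nat.mul_le_mul_right _ this) _
        _ = n * Nat.choose (k + (h-1)) (h-1) := by rw [pascal, Nat.mul_add]


private theorem fijalkow_analytic (n h : ℕ) (hn : 2 ≤ n) (hh : 1 ≤ h) :
    ((n * Nat.choose (Nat.log 2 n + (h - 1)) (h - 1) : ℕ) : ℝ) ≤
      (n : ℝ) ^ (1 + Real.logb 2 (Real.exp 1)) *
        (1 + ((h : ℝ) - 1) / Real.logb 2 n) ^ (Real.logb 2 n) := by
  set k := Nat.log 2 n with hkdef
  set a := h - 1 with hadef
  set K : ℝ := (k : ℝ) with hK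
  set A : ℝ := (a : ℝ) with hA
  set L : ℝ := Real.logb 2 n with hL
  have hk1 : 1 ≤ k := Nat.log_pos (by norm_num) hn
  have hK1 : (1:ℝ) ≤ K := by rw [hK]; exact_mod_cast hk1
  have hKpos : (0:ℝ) < K := by linarith
  have hA0 : (0:ℝ) ≤ A := by positivity
  have hKL : K ≤ L := by
    have h2k : ((2:ℕ) ^ k : ℝ) ≤ (n:ℝ) := by
      exact_mod_cast Nat.pow_log_le_self 2 (by omega)
    calc K = Real.logb 2 ((2:ℝ)^k) := by
            rw [Real.logb_pow]; simp [Real.logb_self_eq_one]; rfl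
      _ ≤ L := by
            apply Real.logb_le_logb_of_le (by norm_num) (by positivity)
            push_cast at h2k ⊢; exact h2k
  have hLpos : (0:ℝ) < L := lt_of_lt_of_le hKpos hKL
  have hKA : (0:ℝ) < K + A := by linarith
  have hLA : (0:ℝ) < L + A := by linarith
  -- Step 1: choose bound
  have c1 : (((k+a).choose a : ℕ) : ℝ) ≤ (K + A)^k / (Nat.factorial k) := by
    have hsym : (k+a).choose a = (k+a).choose k := by
      have := Nat.choose_symm (Nat.le_add_right k a)
      simpa using this
    rw [hsym]
    have := Nat.choose_le_pow_div (α := ℝ) k (k+a)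
    push_cast at this ⊢
    convert this using 3
  -- Step 2: K^k/k! ≤ exp K
  have c2 : K ^ k / (Nat.factorial k) ≤ Real.exp K := by
    calc K ^ k / (Nat.factorial k)
        ≤ ∑ i ∈ Finset.range (k+1), K ^ i / (Nat.factorial i) := by
          apply Finset.single_le_sum (f := fun i => K ^ i / (Nat.factorial i : ℝ))
            (fun i _ => by positivity) (Finset.self_mem_range_succ k)
      _ ≤ Real.exp K := Real.sum_le_exp_of_nonneg hKpos.le _
  have c3 : (((k+a).choose a : ℕ) : ℝ) ≤ Real.exp K * ((K+A)/K)^k := by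
    refine c1.trans ?_
    have hfac : (0:ℝ) < (Nat.factorial k : ℝ) := by positivity
    have heq : (K+A)^k / (Nat.factorial k : ℝ) = ((K+A)/K)^k * (K^k / (Nat.factorial k : ℝ)) := by
      rw [div_pow]
      field_simp
    rw [heq, mul_comm (Real.exp K) _]
    exact mul_le_mul_of_nonneg_left c2 (by positivity)
  -- Step 3: the key monotonicity inequality
  have key : Real.exp K * ((K+A)/K)^k ≤ Real.exp L * ((L+A)/L) ^ L := by
    have hq1 : (0:ℝ) < (K+A)/K := by positivity
    have hq2 : (0:ℝ) < (L+A)/L := by positivity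
    have lhs_eq : Real.exp K * ((K+A)/K)^k = Real.exp (K + Real.log ((K+A)/K) * K) := by
      rw [Real.exp_add, ← Real.rpow_natCast ((K+A)/K) k,
        Real.rpow_def_of_pos hq1]
    have rhs_eq : Real.exp L * ((L+A)/L) ^ L = Real.exp (L + Real.log ((L+A)/L) * L) := by
      rw [Real.exp_add, Real.rpow_def_of_pos hq2]
    rw [lhs_eq, rhs_eq, Real.exp_le_exp]
    set t : ℝ := (K+A)*L/(K*(L+A)) with ht
    have htpos : 0 < t := by positivity
    have hteq : (K+A)/K = t * ((L+A)/L) := by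
      rw [ht]; field_simp [hKpos.ne', hLpos.ne', hLA.ne']
    have hsplit : Real.log ((K+A)/K) = Real.log t + Real.log ((L+A)/L) := by
      rw [hteq, Real.log_mul (ne_of_gt htpos) (ne_of_gt hq2)]
    have hlogt : Real.log t ≤ t - 1 := Real.log_le_sub_one_of_pos htpos
    have hlog2 : 0 ≤ Real.log ((L+A)/L) := by
      apply Real.log_nonneg
      rw [le_div_iff₀ hLpos]; linarith
    have hKt : K * t ≤ L := by
      have hKteq : K * t = (K+A)*L/(L+A) := by
        rw [ht]; field_simp
      rw [hKteq, div_le_iff₀ hLA]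
      nlinarith
    have h1 : Real.log t * K ≤ L - K := by
      calc Real.log t * K ≤ (t - 1) * K :=
            mul_le_mul_of_nonneg_right hlogt hKpos.le
        _ = K * t - K := by ring
        _ ≤ L - K := by linarith
    have h2 : Real.log ((L+A)/L) * K ≤ Real.log ((L+A)/L) * L :=
      mul_le_mul_of_nonneg_left hKL hlog2
    rw [hsplit]
    nlinarith [h1, h2]
  -- Step 4: RHS identity
  have hA' : A = (h:ℝ) - 1 := by
    rw [hA, hadef]; push_cast [Nat.cast_sub hh]; ring
  have hnpos : (0:ℝ) < (n:ℝ) := by positivity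
  have rhs_id : (n : ℝ) ^ (1 + Real.logb 2 (Real.exp 1)) *
      (1 + ((h : ℝ) - 1) / L) ^ L = (n:ℝ) * (Real.exp L * ((L+A)/L) ^ L) := by
    have e1 : (1 + ((h:ℝ)-1)/L) = (L+A)/L := by
      rw [hA']; field_simp
    have e2 : (n:ℝ) ^ (1 + Real.logb 2 (Real.exp 1)) = (n:ℝ) * Real.exp L := by
      rw [Real.rpow_add hnpos, Real.rpow_one]
      congr 1
      rw [Real.rpow_def_of_pos hnpos, hL, Real.logb, Real.logb, Real.log_exp]
      congr 1
      ring
    rw [e1, e2]; ring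
  rw [rhs_id]
  push_cast
  calc (n:ℝ) * ((k+a).choose a : ℕ) ≤ (n:ℝ) * (Real.exp K * ((K+A)/K)^k) := by
        apply mul_le_mul_of_nonneg_left c3 hnpos.le
    _ ≤ (n:ℝ) * (Real.exp L * ((L+A)/L) ^ L) := mul_le_mul_of_nonneg_left key hnpos.le

theorem stmt_3 (f : ℕ → ℕ → ℕ)
    (hf0 : ∀ h, f 0 h = 0)
    (hfn0 : ∀ n, 1 ≤ n → f n 0 = 1)
    (hrec : ∀ n h, 1 ≤ n → 1 ≤ h →
      f n h = f n (h - 1) + f (n / 2) h + f (n - 1 - n / 2) h) :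
    ∀ n h : ℕ, 2 ≤ n → 1 ≤ h →
      (f n h : ℝ) ≤ (n : ℝ) ^ (1 + Real.logb 2 (Real.exp 1)) *
        (1 + ((h : ℝ) - 1) / Real.logb 2 n) ^ (Real.logb 2 n) := by
  intro n h hn hh
  have h1 := fijalkow_key f hf0 hfn0 hrec (n + h) n h le_rfl (by omega)
  have h2 := fijalkow_analytic n h hn hh
  calc (f n h : ℝ) ≤ ((n * Nat.choose (Nat.log 2 n + (h - 1)) (h - 1) : ℕ) : ℝ) := by
        exact_mod_cast h1
    _ ≤ _ := h2
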